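/- Let X, Z be sets, S a compact Hausdorff space, and φ : X × Z × K(S) → Prop together with a dual ∼φ : X × Z × K(S) → Prop satisfying: φ(a,b,C) and ∼φ(a,b,C̃) imply C ∩ C̃ ≠ ∅; and φ monotone and ∼φ monotone in the compact-set argument. Fix a compact symmetric neighborhood ε of the diagonal, and suppose there is a maximal m such that a sequence (a_i;b_i;C_i;C̃_i : i < m) exists with φ(a_n,b_i,C_i) ∧ ∼φ(a_i,b_n,C̃_n) and C_i^ε ∩ C̃_i = ∅ for all i < n < m (ε-stability with maximal witness length m). Define σ((a_0,…,a_{m-1}), b, C) := ⋀_{i<m} φ(a_i,b,C) and ∼σ((a_0,…,a_{m-1}), b, C̃) := ⋁_{i<m} ∼φ(a_i,b,C̃). Then σ is ε-stable: there is a bound k such that no sequence of length k witnesses the ε-order property for σ. -/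
import Mathlib


open Set

/-- Recursive bound used for the prehomogeneous extraction. -/
def ramK (m : ℕ) : ℕ → ℕ
  | 0 => 1
  | j + 1 => m * ramK m j + 1

/-- Prehomogeneous sequence extraction: from any finite set of naturals of size at least
`ramK m j` one may extract an increasing chain of length `j+1` on which the coloring `c`
depends only on the first coordinate. -/
lemma prehom (m : ℕ) (hm0 : 0 < m) (c : ℕ → ℕ → Fin m) :
    ∀ (j : ℕ) (A : Finset ℕ), ramK m j ≤ A.card →
      ∃ (x : ℕ → ℕ) (t : ℕ → Fin m),
        (∀ i ≤ j, x i ∈ A) ∧ (∀ i < j, x i < x (i + 1)) ∧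
        (∀ i p, i < p → p ≤ j → c (x i) (x p) = t i) := by
  haveI : Nonempty (Fin m) := ⟨⟨0, hm0⟩⟩
  intro j
  induction j with
  | zero =>
    intro A hA
    have hne : A.Nonempty := Finset.card_pos.mp (by exact lt_of_lt_of_le one_pos hA)
    obtain ⟨x0, hx0⟩ := hne
    exact ⟨fun _ => x0, fun _ => Classical.arbitrary _,
      fun i _ => hx0, fun i hi => absurd hi (Nat.not_lt_zero i),
      fun i p hip hp => absurd (lt_of_lt_of_le hip hp) (Nat.not_lt_zero i)⟩
  | succ j ih =>
    intro A hA
    have hne : A.Nonempty := Finset.card_pos.mp (lt_of_lt_of_le (Nat.succ_pos _) hA)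
    set x0 := A.min' hne with hx0def
    have hx0A : x0 ∈ A := A.min'_mem hne
    set B := A.erase x0 with hBdef
    have hBcard' : m * ramK m j ≤ B.card := by
      have h1 : B.card = A.card - 1 := Finset.card_erase_of_mem hx0A
      have h2 : ramK m (j + 1) = m * ramK m j + 1 := rfl
      omega
    obtain ⟨t0, -, hfib⟩ :=
      Finset.exists_le_card_fiber_of_mul_le_card_of_maps_to
        (f := fun y => c x0 y) (s := B) (t := (Finset.univ : Finset (Fin m)))
        (fun a _ => Finset.mem_univ _) Finset.univ_nonempty
        (by simpa using hBcard')
    obtain ⟨x, t, hxmem, hxmono, hxcol⟩ := ih _ hfib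
    refine ⟨fun n => Nat.casesOn n x0 x, fun n => Nat.casesOn n t0 t, ?_, ?_, ?_⟩
    · rintro (_ | i) hi
      · exact hx0A
      · exact Finset.mem_of_mem_erase
          (Finset.mem_of_mem_filter _ (hxmem i (Nat.succ_le_succ_iff.mp hi)))
    · rintro (_ | i) hi
      · have hxB : x 0 ∈ B :=
          Finset.mem_of_mem_filter _ (hxmem 0 (Nat.zero_le _))
        have h1 : x0 ≤ x 0 := A.min'_le _ (Finset.mem_of_mem_erase hxB)
        have h2 : x 0 ≠ x0 := Finset.ne_of_mem_erase hxB
        exact lt_of_le_of_ne h1 (Ne.symm h2)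
      · exact hxmono i (Nat.succ_lt_succ_iff.mp hi)
    · rintro (_ | i) (_ | p) hip hp
      · exact absurd hip (lt_irrefl _)
      · have hxf := hxmem p (Nat.succ_le_succ_iff.mp hp)
        exact (Finset.mem_filter.mp hxf).2
      · exact absurd hip (by omega)
      · exact hxcol i p (Nat.succ_lt_succ_iff.mp hip) (Nat.succ_le_succ_iff.mp hp)

lemma chain_mono {x : ℕ → ℕ} {j : ℕ} (h : ∀ i < j, x i < x (i + 1)) :
    ∀ i p, i < p → p ≤ j → x i < x p := by
  intro i p
  induction p with
  | zero => intro hip _; exact absurd hip (Nat.not_lt_zero i)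
  | succ p ihp =>
    intro hip hp
    rcases Nat.lt_succ_iff_lt_or_eq.mp hip with h' | h'
    · exact lt_trans (ihp h' (by omega)) (h p (by omega))
    · subst h'; exact h i (by omega)

/-- The `ε`-fattening `C^ε = {α ∈ S : (ξ, α) ∈ ε for some ξ ∈ C}`. -/
def fat {S : Type*} (ε : Set (S × S)) (C : Set S) : Set S :=
  {α | ∃ ξ ∈ C, (ξ, α) ∈ ε}

/-- The `ε`-order property of length `m` for a pair `(φ, ∼φ)`. -/
def epsOP {S X Z : Type*} (ε : Set (S × S))
    (φ ψ : X → Z → Set S → Prop) (m : ℕ) : Prop :=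
  ∃ (a : ℕ → X) (b : ℕ → Z) (Cs Ct : ℕ → Set S),
    ∀ i n : ℕ, i < n → n < m →
      φ (a n) (b i) (Cs i) ∧ ψ (a i) (b n) (Ct n) ∧ fat ε (Cs i) ∩ Ct i = ∅

theorem stmt13 {S X Z : Type*} [TopologicalSpace S] [CompactSpace S] [T2Space S]
    (ε : Set (S × S)) (hεc : IsCompact ε)
    (hsym : ∀ α β : S, (α, β) ∈ ε ↔ (β, α) ∈ ε)
    (hdiag : ∃ O : Set (S × S), IsOpen O ∧ {p : S × S | p.1 = p.2} ⊆ O ∧ O ⊆ ε)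
    (φ ψ : X → Z → Set S → Prop)
    (hdual : ∀ a b C Ct, φ a b C → ψ a b Ct → (C ∩ Ct).Nonempty)
    (hmφ : ∀ a b (C C' : Set S), C ⊆ C' → φ a b C → φ a b C')
    (hmψ : ∀ a b (C C' : Set S), C ⊆ C' → ψ a b C → ψ a b C')
    (m : ℕ) (hm : epsOP ε φ ψ m) (hmax : ¬ epsOP ε φ ψ (m + 1)) :
    ∃ k : ℕ, ¬ epsOP ε
      (fun (abar : Fin m → X) (b : Z) (C : Set S) => ∀ t : Fin m, φ (abar t) b C)
      (fun (abar : Fin m → X) (b : Z) (Ct : Set S) => ∃ t : Fin m, ψ (abar t) b Ct) k := by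
  classical
  rcases Nat.eq_zero_or_pos m with hm0 | hm0
  · subst hm0
    refine ⟨2, ?_⟩
    rintro ⟨a, b, Cs, Ct, H⟩
    obtain ⟨t, -⟩ := (H 0 1 (by norm_num) (by norm_num)).2.1
    exact absurd t.2 (by omega)
  · haveI : Nonempty (Fin m) := ⟨⟨0, hm0⟩⟩
    refine ⟨ramK m m, ?_⟩
    rintro ⟨a, b, Cs, Ct, H⟩
    apply hmax
    set c : ℕ → ℕ → Fin m := fun i n =>
      if h : ∃ s, ψ (a i s) (b n) (Ct n) then h.choose else Classical.arbitrary _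
      with hcdef
    obtain ⟨x, t, hxmem, hxmono, hxcol⟩ :=
      prehom m hm0 c m (Finset.range (ramK m m)) (by simp)
    have hlt := chain_mono hxmono
    refine ⟨fun n => a (x n) (t n), fun n => b (x n), fun n => Cs (x n),
      fun n => Ct (x n), ?_⟩
    intro i n hin hn
    have hn' : n ≤ m := Nat.lt_succ_iff.mp hn
    have hxin : x i < x n := hlt i n hin hn'
    have hxnk : x n < ramK m m := Finset.mem_range.mp (hxmem n hn')
    obtain ⟨hφ, hψ, hfat⟩ := H (x i) (x n) hxin hxnk
    refine ⟨hφ (t n), ?_, hfat⟩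
    have hc : c (x i) (x n) = t i := hxcol i n hin hn'
    have hψ' : ψ (a (x i) (c (x i) (x n))) (b (x n)) (Ct (x n)) := by
      rw [hcdef]
      simp only [dif_pos hψ]
      exact hψ.choose_spec
    rwa [hc] at hψ'
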